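/- Let (Ω, μ) be a probability space, X : Ω → ℝ a measurable random variable, β a real number with 0 < β ≤ 1, and η ∈ ℝ with μ({ω : X(ω) ≥ η}) = β. Let g : ℝ → ℝ be a strictly increasing function such that g∘X is integrable. Then ∫ g(X)·1_{X ≥ η} dμ = ⨅_{s ∈ ℝ} ( β·s + ∫ max(g(X) − s, 0) dμ ), and the infimum is attained at s = g(η). (In particular, for an increasing loss, the average loss over the top-β fraction of scores equals the Average-Top-k / CVaR formula applied to the composed losses.) -/

import Mathlib

open MeasureTheory

/-- CVaR identity for an increasing loss: if `μ(X ≥ η) = β` with `0 < β ≤ 1` and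
`g` is strictly increasing with `g ∘ X` integrable, then
`∫ g(X)·1_{X ≥ η} dμ = ⨅ s, (β s + ∫ max (g(X) - s) 0 dμ)`, attained at `s = g η`. -/
theorem stmt_3 {Ω : Type*} [MeasurableSpace Ω] (μ : Measure Ω) [IsProbabilityMeasure μ]
    (X : Ω → ℝ) (hXm : Measurable X)
    (β : ℝ) (hβ0 : 0 < β) (hβ1 : β ≤ 1) (η : ℝ)
    (hη : μ {ω | η ≤ X ω} = ENNReal.ofReal β)
    (g : ℝ → ℝ) (hg : StrictMono g)
    (hgi : Integrable (fun ω => g (X ω)) μ) :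
    ((∫ ω, Set.indicator {ω | η ≤ X ω} (fun ω' => g (X ω')) ω ∂μ) =
      ⨅ s : ℝ, (β * s + ∫ ω, max (g (X ω) - s) 0 ∂μ)) ∧
    ((∫ ω, Set.indicator {ω | η ≤ X ω} (fun ω' => g (X ω')) ω ∂μ) =
      β * g η + ∫ ω, max (g (X ω) - g η) 0 ∂μ) := by
  set A := {ω | η ≤ X ω} with hAdef
  have hA : MeasurableSet A := measurableSet_le measurable_const hXm
  have hμA : (μ A).toReal = β := by rw [hη, ENNReal.toReal_ofReal hβ0.le]
  have hmax : ∀ s : ℝ, Integrable (fun ω => max (g (X ω) - s) 0) μ := by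
    intro s
    simpa using (hgi.sub (integrable_const s)).pos_part
  have hpt : (fun ω => max (g (X ω) - g η) 0)
      = fun ω => A.indicator (fun ω' => g (X ω') - g η) ω := by
    funext ω
    by_cases h : ω ∈ A
    · rw [Set.indicator_of_mem h]
      have h1 : g η ≤ g (X ω) := hg.le_iff_le.mpr h
      exact max_eq_left (by linarith)
    · rw [Set.indicator_of_notMem h]
      have h1 : g (X ω) < g η := hg.lt_iff_lt.mpr (not_le.mp h)
      exact max_eq_right (by linarith)
  have key : ∫ ω, max (g (X ω) - g η) 0 ∂μ
      = (∫ ω, A.indicator (fun ω' => g (X ω')) ω ∂μ) - g η * β := by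
    rw [hpt, integral_indicator hA, integral_indicator hA,
      integral_sub hgi.integrableOn (integrableOn_const (measure_lt_top μ A).ne),
      setIntegral_const, measureReal_def, hμA, smul_eq_mul, mul_comm]
  have hlow : ∀ s : ℝ, β * g η + ∫ ω, max (g (X ω) - g η) 0 ∂μ
      ≤ β * s + ∫ ω, max (g (X ω) - s) 0 ∂μ := by
    intro s
    have hptle : ∀ ω, max (g (X ω) - g η) 0 + A.indicator (fun _ => g η - s) ω
        ≤ max (g (X ω) - s) 0 := by
      intro ω
      by_cases h : ω ∈ A
      · have h1 : g η ≤ g (X ω) := hg.le_iff_le.mpr h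
        rw [Set.indicator_of_mem h, max_eq_left (by linarith : (0:ℝ) ≤ g (X ω) - g η)]
        have : g (X ω) - g η + (g η - s) = g (X ω) - s := by ring
        rw [this]
        exact le_max_left _ _
      · have h1 : g (X ω) < g η := hg.lt_iff_lt.mpr (not_le.mp h)
        rw [Set.indicator_of_notMem h, max_eq_right (by linarith : g (X ω) - g η ≤ 0)]
        simpa using le_max_right (g (X ω) - s) 0
    have hint : ∫ ω, (max (g (X ω) - g η) 0 + A.indicator (fun _ => g η - s) ω) ∂μ
        ≤ ∫ ω, max (g (X ω) - s) 0 ∂μ :=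
      integral_mono ((hmax _).add ((integrable_const _).indicator hA)) (hmax s) hptle
    rw [integral_add (hmax _) ((integrable_const _).indicator hA), integral_indicator hA,
        setIntegral_const, measureReal_def, hμA, smul_eq_mul] at hint
    nlinarith [hint]
  have hval : (∫ ω, A.indicator (fun ω' => g (X ω')) ω ∂μ)
      = β * g η + ∫ ω, max (g (X ω) - g η) 0 ∂μ := by linarith [key]
  refine ⟨?_, hval⟩
  have hbdd : BddBelow (Set.range fun s : ℝ => β * s + ∫ ω, max (g (X ω) - s) 0 ∂μ) := by
    refine ⟨β * g η + ∫ ω, max (g (X ω) - g η) 0 ∂μ, ?_⟩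
    rintro x ⟨s, rfl⟩
    exact hlow s
  rw [hval]
  exact le_antisymm (le_ciInf hlow) (ciInf_le hbdd (g η))
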